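/- Let Ψ = (ψ₁, ψ₀, ψ₋₁) be a triple of complex numbers written in polar form ψ_j = u_j e^{iθ_j} with u_j ≥ 0 and θ_j ∈ ℝ, and let S_x, S_y, S_z be the spin-1 Pauli matrices S_x = (1/√2)[[0,1,0],[1,0,1],[0,1,0]], S_y = (i/√2)[[0,−1,0],[1,0,−1],[0,1,0]], S_z = diag(1,0,−1). Then |Ψ*S_xΨ|² + |Ψ*S_yΨ|² + |Ψ*S_zΨ|² = 2u₀²( u₁² + u₋₁² + 2u₁u₋₁ cos(θ₁ − 2θ₀ + θ₋₁) ) + (u₁² − u₋₁²)². Consequently 2u₀²(u₁ − u₋₁)² + (u₁² − u₋₁²)² ≤ |Ψ*S_xΨ|² + |Ψ*S_yΨ|² + |Ψ*S_zΨ|² ≤ 2u₀²(u₁ + u₋₁)² + (u₁² − u₋₁²)², with equality in the upper (resp. lower) bound if and only if u₀²u₁u₋₁(cos(θ₁ − 2θ₀ + θ₋₁) − 1) = 0 (resp. u₀²u₁u₋₁(cos(θ₁ − 2θ₀ + θ₋₁) + 1) = 0). -/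

import Mathlib

open Matrix

set_option maxHeartbeats 1000000

/-- For `Ψ = (u₁e^{iθ₁}, u₀e^{iθ₀}, u₋₁e^{iθ₋₁})` with `uⱼ ≥ 0` and the spin-1 Pauli
matrices `Sx, Sy, Sz`, one has
`|Ψ*SxΨ|² + |Ψ*SyΨ|² + |Ψ*SzΨ|²
  = 2u₀²(u₁² + u₋₁² + 2u₁u₋₁ cos(θ₁ − 2θ₀ + θ₋₁)) + (u₁² − u₋₁²)²`,
whence the two-sided bounds
`2u₀²(u₁−u₋₁)² + (u₁²−u₋₁²)² ≤ |Ψ*SΨ|² ≤ 2u₀²(u₁+u₋₁)² + (u₁²−u₋₁²)²`,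
with equality in the upper (resp. lower) bound iff
`u₀²u₁u₋₁(cos(θ₁−2θ₀+θ₋₁) − 1) = 0` (resp. `u₀²u₁u₋₁(cos(θ₁−2θ₀+θ₋₁) + 1) = 0`). -/
theorem spin_interaction_amplitude_reduction
    (u1 u0 um1 : ℝ) (hu1 : 0 ≤ u1) (hu0 : 0 ≤ u0) (hum1 : 0 ≤ um1)
    (t1 t0 tm1 : ℝ)
    (Ψ : Fin 3 → ℂ)
    (hΨ : Ψ = ![(u1 : ℂ) * Complex.exp (t1 * Complex.I),
                (u0 : ℂ) * Complex.exp (t0 * Complex.I),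
                (um1 : ℂ) * Complex.exp (tm1 * Complex.I)])
    (Sx Sy Sz : Matrix (Fin 3) (Fin 3) ℂ)
    (hSx : Sx = (1 / (Real.sqrt 2 : ℂ)) • !![0, 1, 0; 1, 0, 1; 0, 1, 0])
    (hSy : Sy = (Complex.I / (Real.sqrt 2 : ℂ)) • !![0, -1, 0; 1, 0, -1; 0, 1, 0])
    (hSz : Sz = !![1, 0, 0; 0, 0, 0; 0, 0, -1])
    (S : ℝ)
    (hS : S = ‖star Ψ ⬝ᵥ Sx.mulVec Ψ‖ ^ 2
            + ‖star Ψ ⬝ᵥ Sy.mulVec Ψ‖ ^ 2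
            + ‖star Ψ ⬝ᵥ Sz.mulVec Ψ‖ ^ 2) :
    S = 2 * u0 ^ 2 * (u1 ^ 2 + um1 ^ 2 + 2 * u1 * um1 * Real.cos (t1 - 2 * t0 + tm1))
        + (u1 ^ 2 - um1 ^ 2) ^ 2 ∧
    2 * u0 ^ 2 * (u1 - um1) ^ 2 + (u1 ^ 2 - um1 ^ 2) ^ 2 ≤ S ∧
    S ≤ 2 * u0 ^ 2 * (u1 + um1) ^ 2 + (u1 ^ 2 - um1 ^ 2) ^ 2 ∧
    (S = 2 * u0 ^ 2 * (u1 + um1) ^ 2 + (u1 ^ 2 - um1 ^ 2) ^ 2 ↔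
      u0 ^ 2 * u1 * um1 * (Real.cos (t1 - 2 * t0 + tm1) - 1) = 0) ∧
    (S = 2 * u0 ^ 2 * (u1 - um1) ^ 2 + (u1 ^ 2 - um1 ^ 2) ^ 2 ↔
      u0 ^ 2 * u1 * um1 * (Real.cos (t1 - 2 * t0 + tm1) + 1) = 0) := by
  have h2 : Real.sqrt 2 ^ 2 = 2 := Real.sq_sqrt (by norm_num)
  have hsc : (1 / (Real.sqrt 2 : ℂ)) = (((Real.sqrt 2)⁻¹ : ℝ) : ℂ) := by push_cast; ring
  have habs : ∀ r : ℝ, ‖(1 / (Real.sqrt 2 : ℂ)) * (r : ℂ)‖ ^ 2 = r ^ 2 / 2 := by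
    intro r
    have h2' : ((Real.sqrt 2)⁻¹) ^ 2 = 2⁻¹ := by rw [inv_pow, h2]
    rw [hsc, ← Complex.ofReal_mul, Complex.sq_norm, Complex.normSq_ofReal]
    linear_combination (r ^ 2) * h2'
  have hx : star Ψ ⬝ᵥ Sx.mulVec Ψ
      = (1 / (Real.sqrt 2 : ℂ)) *
        ((2*u0*u1*Real.cos (t1-t0) + 2*u0*um1*Real.cos (tm1-t0) : ℝ) : ℂ) := by
    subst hΨ hSx
    simp only [dotProduct, Matrix.mulVec, Fin.sum_univ_three, Matrix.cons_val_zero,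
      Matrix.cons_val_one, Matrix.head_cons, Matrix.cons_val_two, Matrix.tail_cons,
      Matrix.smul_apply, Matrix.cons_val', Matrix.empty_val', Matrix.cons_val_fin_one,
      Pi.star_apply, smul_eq_mul, Matrix.vecHead, Matrix.vecTail]
    apply Complex.ext <;>
      simp [Complex.exp_mul_I, Complex.mul_re, Complex.mul_im, Complex.div_re, Complex.div_im,
        Complex.normSq_apply, Real.cos_sub, Real.sin_sub] <;> ring
  have hy : star Ψ ⬝ᵥ Sy.mulVec Ψ
      = (1 / (Real.sqrt 2 : ℂ)) *
        ((-(2*u0*u1*Real.sin (t1-t0)) + 2*u0*um1*Real.sin (tm1-t0) : ℝ) : ℂ) := by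
    subst hΨ hSy
    simp only [dotProduct, Matrix.mulVec, Fin.sum_univ_three, Matrix.cons_val_zero,
      Matrix.cons_val_one, Matrix.head_cons, Matrix.cons_val_two, Matrix.tail_cons,
      Matrix.smul_apply, Matrix.cons_val', Matrix.empty_val', Matrix.cons_val_fin_one,
      Pi.star_apply, smul_eq_mul, Matrix.vecHead, Matrix.vecTail]
    apply Complex.ext <;>
      simp [Complex.exp_mul_I, Complex.mul_re, Complex.mul_im, Complex.div_re, Complex.div_im,
        Complex.normSq_apply, Real.cos_sub, Real.sin_sub] <;> ring
  have hz : star Ψ ⬝ᵥ Sz.mulVec Ψ = ((u1 ^ 2 - um1 ^ 2 : ℝ) : ℂ) := by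
    subst hΨ hSz
    simp only [dotProduct, Matrix.mulVec, Fin.sum_univ_three, Matrix.cons_val_zero,
      Matrix.cons_val_one, Matrix.head_cons, Matrix.cons_val_two, Matrix.tail_cons,
      Matrix.smul_apply, Matrix.cons_val', Matrix.empty_val', Matrix.cons_val_fin_one,
      Pi.star_apply, smul_eq_mul, Matrix.vecHead, Matrix.vecTail]
    apply Complex.ext <;>
      simp [Complex.exp_mul_I, Complex.mul_re, Complex.mul_im, Complex.normSq_apply,
        Matrix.vecHead, Matrix.vecTail, Complex.cos_ofReal_re, Complex.sin_ofReal_re,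
        ← Complex.ofReal_pow] <;>
      first
        | linear_combination u1 ^ 2 * Real.sin_sq_add_cos_sq t1 - um1 ^ 2 * Real.sin_sq_add_cos_sq tm1
        | ring
  have hmain : S = 2 * u0 ^ 2 *
      (u1 ^ 2 + um1 ^ 2 + 2 * u1 * um1 * Real.cos (t1 - 2 * t0 + tm1))
      + (u1 ^ 2 - um1 ^ 2) ^ 2 := by
    rw [hS, hx, hy, hz, habs, habs, Complex.norm_real, Real.norm_eq_abs, sq_abs,
      show t1 - 2 * t0 + tm1 = (t1 - t0) + (tm1 - t0) by ring, Real.cos_add]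
    linear_combination (2 * u0 ^ 2 * u1 ^ 2) * Real.sin_sq_add_cos_sq (t1 - t0)
      + (2 * u0 ^ 2 * um1 ^ 2) * Real.sin_sq_add_cos_sq (tm1 - t0)
  have hc1 : Real.cos (t1 - 2 * t0 + tm1) ≤ 1 := Real.cos_le_one _
  have hc2 : -1 ≤ Real.cos (t1 - 2 * t0 + tm1) := Real.neg_one_le_cos _
  refine ⟨hmain, by nlinarith [mul_nonneg (mul_nonneg (sq_nonneg u0) hu1) hum1],
    by nlinarith [mul_nonneg (mul_nonneg (sq_nonneg u0) hu1) hum1], ?_, ?_⟩ <;>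
    constructor <;> intro h <;> nlinarith [h, hmain]
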